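/- If σ ∈ S_n is a permutation in which every digit is a separator, then σ has no bonds, i.e., σ ∈ K_n. -/

import Mathlib

/-- The entry at position `k` of `σ` (0-indexed) is a *vertical separator*:
there are positions `j, j+1, j+2` with `k = j+1` and `|σ j - σ (j+2)| = 1`. -/
def IsVSepPos {n : ℕ} (σ : Equiv.Perm (Fin n)) (k : Fin n) : Prop :=
  ∃ (j : ℕ) (h : j + 2 < n), (k : ℕ) = j + 1 ∧
    (((σ ⟨j, by omega⟩).val : ℤ) - ((σ ⟨j + 2, h⟩).val : ℤ)).natAbs = 1

/-- The value `b` is a vertical separator of `σ`. -/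
def IsVSepVal {n : ℕ} (σ : Equiv.Perm (Fin n)) (b : Fin n) : Prop :=
  IsVSepPos σ (σ⁻¹ b)

/-- The value `a` is a *horizontal separator* of `σ`: the values `a-1` and `a+1`
occupy adjacent positions of `σ` (their sum is `2a` and they differ by `2`). -/
def IsHSepVal {n : ℕ} (σ : Equiv.Perm (Fin n)) (a : Fin n) : Prop :=
  ∃ (j : ℕ) (h : j + 1 < n),
    (((σ ⟨j, by omega⟩).val : ℤ) - ((σ ⟨j + 1, h⟩).val : ℤ)).natAbs = 2 ∧
    ((σ ⟨j, by omega⟩).val : ℤ) + ((σ ⟨j + 1, h⟩).val : ℤ) = 2 * (a : ℤ)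

/-- `σ` has a bond at positions `j, j+1`. -/
def PermBondAt {n : ℕ} (σ : Equiv.Perm (Fin n)) (j : ℕ) (h : j + 1 < n) : Prop :=
  (((σ ⟨j, by omega⟩).val : ℤ) - ((σ ⟨j + 1, h⟩).val : ℤ)).natAbs = 1

/-- The sequence obtained from `σ` by deleting the entry at position `p`
and standardizing. -/
def delSeq {n : ℕ} (σ : Equiv.Perm (Fin n)) (p : Fin n) : Fin (n - 1) → ℕ :=
  fun k =>
    let q : Fin n :=
      if (k : ℕ) < (p : ℕ) then ⟨k, by have := k.isLt; omega⟩
      else ⟨(k : ℕ) + 1, by have := k.isLt; omega⟩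
    if (σ q).val < (σ p).val then (σ q).val else (σ q).val - 1

/-- A sequence has a bond at positions `j, j+1`. -/
def SeqBondAt {m : ℕ} (g : Fin m → ℕ) (j : ℕ) (h : j + 1 < m) : Prop :=
  ((g ⟨j, by omega⟩ : ℤ) - (g ⟨j + 1, h⟩ : ℤ)).natAbs = 1

/-- The number of bonds of a sequence. -/
noncomputable def seqBondCount {m : ℕ} (g : Fin m → ℕ) : ℕ :=
  Nat.card {p : Fin m × Fin m //
    (p.2 : ℕ) = (p.1 : ℕ) + 1 ∧ ((g p.1 : ℤ) - (g p.2 : ℤ)).natAbs = 1}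

/-- The number of bonds of `σ`. -/
noncomputable def bondCount {n : ℕ} (σ : Equiv.Perm (Fin n)) : ℕ :=
  Nat.card {p : Fin n × Fin n //
    (p.2 : ℕ) = (p.1 : ℕ) + 1 ∧ (((σ p.1).val : ℤ) - ((σ p.2).val : ℤ)).natAbs = 1}

namespace Stmt6Aux


variable {n : ℕ}

/-- value of σ at position i as an integer, -1 if out of range -/
def sv (σ : Equiv.Perm (Fin n)) (i : ℕ) : ℤ :=
  if h : i < n then ((σ ⟨i, h⟩).val : ℤ) else -1

lemma sv_eq (σ : Equiv.Perm (Fin n)) {i : ℕ} (h : i < n) :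
    sv σ i = ((σ ⟨i, h⟩).val : ℤ) := dif_pos h

lemma sv_nonneg (σ : Equiv.Perm (Fin n)) {i : ℕ} (h : i < n) :
    0 ≤ sv σ i ∧ sv σ i < n := by
  rw [sv_eq σ h]
  exact ⟨Int.ofNat_nonneg _, by exact_mod_cast (σ ⟨i, h⟩).isLt⟩

lemma sv_inj (σ : Equiv.Perm (Fin n)) {i j : ℕ} (hi : i < n) (hj : j < n)
    (h : sv σ i = sv σ j) : i = j := by
  rw [sv_eq σ hi, sv_eq σ hj] at h
  have h2 : σ ⟨i, hi⟩ = σ ⟨j, hj⟩ := Fin.ext (by exact_mod_cast h)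
  simpa using congrArg Fin.val (σ.injective h2)

/-- querying the separator hypothesis at a position, in `sv` terms -/
lemma query (σ : Equiv.Perm (Fin n)) (hsep : ∀ b : Fin n, IsVSepVal σ b ∨ IsHSepVal σ b)
    {t : ℕ} (ht : t < n) :
    (∃ j : ℕ, j + 2 < n ∧ t = j + 1 ∧ (sv σ j - sv σ (j + 2)).natAbs = 1) ∨
    (∃ j : ℕ, j + 1 < n ∧ (sv σ j - sv σ (j + 1)).natAbs = 2 ∧
       sv σ j + sv σ (j + 1) = 2 * sv σ t) := by
  rcases hsep (σ ⟨t, ht⟩) with h | h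
  · left
    unfold IsVSepVal IsVSepPos at h
    rw [show σ⁻¹ (σ ⟨t, ht⟩) = ⟨t, ht⟩ from σ.symm_apply_apply _] at h
    obtain ⟨j, hj, hk, habs⟩ := h
    exact ⟨j, hj, hk, by rw [sv_eq σ (by omega : j < n), sv_eq σ hj]; exact habs⟩
  · right
    obtain ⟨j, hj, habs, hsum⟩ := h
    refine ⟨j, hj, ?_, ?_⟩
    · rw [sv_eq σ (by omega : j < n), sv_eq σ hj]; exact habs
    · rw [sv_eq σ (by omega : j < n), sv_eq σ hj, sv_eq σ ht]; exact hsum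


/-- right-growing zigzag invariant: positions p..p+k hold a, a+1, a-1, a+2, a-2,... -/
def C (σ : Equiv.Perm (Fin n)) (p : ℕ) (a : ℤ) (k : ℕ) : Prop :=
  p + k < n ∧ (∀ i : ℕ, 2*i ≤ k → sv σ (p + 2*i) = a - i) ∧
    (∀ i : ℕ, 2*i + 1 ≤ k → sv σ (p + (2*i + 1)) = a + i + 1)

lemma Rstep (σ : Equiv.Perm (Fin n)) (hsep : ∀ b : Fin n, IsVSepVal σ b ∨ IsHSepVal σ b) (p : ℕ) (a : ℤ) {k : ℕ}
    (hk3 : 3 ≤ k) (hC : C σ p a k) : C σ p a (k + 1) := by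
  obtain ⟨hb, hev, hod⟩ := hC
  rcases Nat.even_or_odd k with he | ho
  · -- k even, k = 2m'+4
    obtain ⟨m, hm⟩ := he
    obtain ⟨m', rfl⟩ : ∃ m', m = m' + 2 := ⟨m - 2, by omega⟩
    subst hm
    rcases query σ hsep hb with ⟨j, hj2, hjt, habs⟩ | ⟨j, hj1, habs, hsum⟩
    · -- vertical: j = p + 2m'+3
      obtain rfl : j = p + (2*(m'+1) + 1) := by omega
      rw [hod (m'+1) (by omega)] at habs
      have hopts : sv σ (p + (2*(m'+1)+1) + 2) = a + m' + 1 ∨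
          sv σ (p + (2*(m'+1)+1) + 2) = a + m' + 3 := by omega
      rcases hopts with hx | hx
      · -- value a+m'+1 already at p+2m'+1
        have := sv_inj σ hj2 (by omega : p + (2*m'+1) < n)
          (by rw [hx, hod m' (by omega)])
        omega
      · refine ⟨by omega, fun i hi => hev i (by omega), fun i hi => ?_⟩
        rcases Nat.lt_or_ge (2*i+1) ((m'+2)+(m'+2)) with h | h
        · exact hod i (by omega)
        · obtain rfl : i = m' + 2 := by omega
          have : p + (2*(m'+2)+1) = p + (2*(m'+1)+1) + 2 := by ring
          rw [this, hx]; push_cast; ring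
    · -- horizontal: impossible
      rw [show p + (m'+2+(m'+2)) = p + 2*(m'+2) by ring] at hsum
      rw [hev (m'+2) (by omega)] at hsum
      have hq : sv σ (p + 2*(m'+1)) = a - (m'+1) := hev (m'+1) (by omega)
      have hc : sv σ j = a - m' - 1 ∨ sv σ (j+1) = a - m' - 1 := by
        push_cast at hq hsum ⊢; omega
      rcases hc with hx | hx
      · have : j = p + 2*(m'+1) := sv_inj σ (by omega) (by omega)
          (by rw [hx, hq]; push_cast; ring)
        subst this
        rw [show p + 2*(m'+1) + 1 = p + (2*(m'+1)+1) by ring] at hsum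
        rw [hod (m'+1) (by omega)] at hsum
        push_cast at hsum hq hx ⊢; omega
      · have he2 : j + 1 = p + 2*(m'+1) := sv_inj σ (by omega) (by omega)
          (by rw [hx, hq]; push_cast; ring)
        obtain rfl : j = p + (2*m' + 1) := by omega
        rw [hod m' (by omega)] at habs hsum
        push_cast at hsum hx ⊢; omega
  · -- k odd, k = 2m''+3
    obtain ⟨m, hm⟩ := ho
    obtain ⟨m', rfl⟩ : ∃ m', m = m' + 1 := ⟨m - 1, by omega⟩
    subst hm
    rcases query σ hsep hb with ⟨j, hj2, hjt, habs⟩ | ⟨j, hj1, habs, hsum⟩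
    · -- vertical: j = p + 2(m'+1)
      obtain rfl : j = p + 2*(m'+1) := by omega
      rw [hev (m'+1) (by omega)] at habs
      have hopts : sv σ (p + 2*(m'+1) + 2) = a - m' ∨
          sv σ (p + 2*(m'+1) + 2) = a - m' - 2 := by push_cast at habs ⊢; omega
      rcases hopts with hx | hx
      · have := sv_inj σ hj2 (by omega : p + 2*m' < n)
          (by rw [hx, hev m' (by omega)])
        omega
      · refine ⟨by omega, fun i hi => ?_, fun i hi => hod i (by omega)⟩
        rcases Nat.lt_or_ge (2*i) (2*(m'+1)+1) with h | h
        · exact hev i (by omega)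
        · obtain rfl : i = m' + 2 := by omega
          have : p + 2*(m'+2) = p + 2*(m'+1) + 2 := by ring
          rw [this, hx]; push_cast; ring
    · -- horizontal: impossible
      rw [hod (m'+1) (by omega)] at hsum
      have hq : sv σ (p + (2*m'+1)) = a + m' + 1 := hod m' (by omega)
      have hc : sv σ j = a + m' + 1 ∨ sv σ (j+1) = a + m' + 1 := by
        push_cast at hq hsum ⊢; omega
      rcases hc with hx | hx
      · have : j = p + (2*m'+1) := sv_inj σ (by omega) (by omega) (by rw [hx, hq])
        subst this
        rw [show p + (2*m'+1) + 1 = p + 2*(m'+1) by ring, hev (m'+1) (by omega)] at hsum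
        push_cast at hsum hx ⊢; omega
      · have he2 : j + 1 = p + (2*m'+1) := sv_inj σ (by omega) (by omega) (by rw [hx, hq])
        obtain rfl : j = p + 2*m' := by omega
        rw [hev m' (by omega)] at habs hsum
        push_cast at hsum hx habs ⊢; omega

lemma Rfalse (σ : Equiv.Perm (Fin n)) (hsep : ∀ b : Fin n, IsVSepVal σ b ∨ IsHSepVal σ b) (p : ℕ) (a : ℤ)
    (h : C σ p a 3) : False := by
  have H : ∀ k, 3 ≤ k → C σ p a k := by
    intro k hk
    induction k, hk using Nat.le_induction with
    | base => exact h
    | succ k hk ih => exact Rstep σ hsep p a hk ih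
  have := (H (n + 3) (by omega)).1
  omega


/-- two-sided zigzag invariant: positions p-i .. p+2+j hold
a-2i, ..., a-4, a-2, a, a+1, a-1, a-3, ..., a-1-2j -/
def D (σ : Equiv.Perm (Fin n)) (p : ℕ) (a : ℤ) (i j : ℕ) : Prop :=
  i ≤ p ∧ p + 2 + j < n ∧ sv σ p = a ∧ sv σ (p + 1) = a + 1 ∧
    (∀ t : ℕ, 1 ≤ t → t ≤ i → sv σ (p - t) = a - 2 * t) ∧
    (∀ s : ℕ, s ≤ j → sv σ (p + 2 + s) = a - 1 - 2 * s)

lemma Lstep1 (σ : Equiv.Perm (Fin n)) (hsep : ∀ b : Fin n, IsVSepVal σ b ∨ IsHSepVal σ b) (p : ℕ) (a : ℤ) {j : ℕ}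
    (hD : D σ p a (j + 1) j) : D σ p a (j + 1) (j + 1) := by
  obtain ⟨hip, hjn, h0, h1, hL, hR⟩ := hD
  -- uniform facts
  have hA : sv σ (p - j) = a - 2 * j := by
    rcases Nat.eq_zero_or_pos j with rfl | hj
    · simpa using h0
    · exact hL j hj (by omega)
  have hB : sv σ (p + 1 + j) = a + 1 - 2 * j := by
    rcases Nat.eq_zero_or_pos j with rfl | hj
    · simpa using h1
    · have := hR (j - 1) (by omega)
      rw [show p + 2 + (j - 1) = p + 1 + j by omega] at this
      rw [this]; push_cast [hj]; omega
  have hq : sv σ (p + 2 + j) = a - 1 - 2 * j := hR j le_rfl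
  have hv : sv σ (p - (j + 1)) = a - 2 * (j + 1) := hL (j + 1) (by omega) le_rfl
  rcases query σ hsep (show p - (j + 1) < n by omega) with
    ⟨j0, hj02, heq, habs⟩ | ⟨j0, hj01, habs, hsum⟩
  · -- vertical: impossible
    exfalso
    rw [show j0 + 2 = p - j by omega, hA] at habs
    have hopts : sv σ j0 = a - 2 * j - 1 ∨ sv σ j0 = a - 2 * j + 1 := by omega
    rcases hopts with hx | hx
    · have := sv_inj σ (by omega : j0 < n) (by omega : p + 2 + j < n)
        (by rw [hx, hq]; ring)
      omega
    · have := sv_inj σ (by omega : j0 < n) (by omega : p + 1 + j < n)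
        (by rw [hx, hB]; ring)
      omega
  · -- horizontal: forced growth to the right
    rw [hv] at hsum
    have hc : sv σ j0 = a - 1 - 2 * j ∨ sv σ (j0 + 1) = a - 1 - 2 * j := by omega
    rcases hc with hx | hx
    · have he : j0 = p + 2 + j := sv_inj σ (by omega) (by omega) (by rw [hx, hq])
      subst he
      have hnew : sv σ (p + 2 + (j + 1)) = a - 1 - 2 * (j + 1) := by
        rw [show p + 2 + (j + 1) = p + 2 + j + 1 by ring]; omega
      refine ⟨hip, by omega, h0, h1, hL, fun s hs => ?_⟩
      rcases Nat.lt_or_ge s (j + 1) with h | h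
      · exact hR s (by omega)
      · obtain rfl : s = j + 1 := by omega
        rw [hnew]; push_cast; ring
    · exfalso
      have he : j0 + 1 = p + 2 + j := sv_inj σ (by omega) (by omega) (by rw [hx, hq])
      obtain rfl : j0 = p + 1 + j := by omega
      rw [hB] at hsum
      omega

lemma Lstep2 (σ : Equiv.Perm (Fin n)) (hsep : ∀ b : Fin n, IsVSepVal σ b ∨ IsHSepVal σ b) (p : ℕ) (a : ℤ) {j : ℕ}
    (hj1 : 1 ≤ j) (hD : D σ p a j j) : D σ p a (j + 1) j := by
  obtain ⟨hip, hjn, h0, h1, hL, hR⟩ := hD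
  have hA : sv σ (p - j) = a - 2 * j := hL j hj1 le_rfl
  have hA' : sv σ (p - (j - 1)) = a - 2 * (j - 1) := by
    rcases Nat.lt_or_ge j 2 with h | h
    · obtain rfl : j = 1 := by omega
      simpa using h0
    · have := hL (j - 1) (by omega) (by omega)
      rw [this]; push_cast [h]; omega
  have hB : sv σ (p + 1 + j) = a + 1 - 2 * j := by
    have := hR (j - 1) (by omega)
    rw [show p + 2 + (j - 1) = p + 1 + j by omega] at this
    rw [this]; push_cast [hj1]; omega
  have hv : sv σ (p + 2 + j) = a - 1 - 2 * j := hR j le_rfl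
  rcases query σ hsep (show p + 2 + j < n from hjn) with
    ⟨j0, hj02, heq, habs⟩ | ⟨j0, hj01, habs, hsum⟩
  · -- vertical: impossible
    exfalso
    obtain rfl : j0 = p + 1 + j := by omega
    rw [hB] at habs
    have hopts : sv σ (p + 1 + j + 2) = a - 2 * j ∨
        sv σ (p + 1 + j + 2) = a - 2 * (j - 1) := by push_cast [hj1]; omega
    rcases hopts with hx | hx
    · have := sv_inj σ (by omega : p + 1 + j + 2 < n) (by omega : p - j < n)
        (by rw [hx, hA])
      omega
    · have := sv_inj σ (by omega : p + 1 + j + 2 < n) (by omega : p - (j - 1) < n)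
        (by rw [hx, hA'])
      omega
  · -- horizontal: forced growth to the left
    rw [hv] at hsum
    have hc : sv σ j0 = a - 2 * j ∨ sv σ (j0 + 1) = a - 2 * j := by omega
    rcases hc with hx | hx
    · exfalso
      have he : j0 = p - j := sv_inj σ (by omega) (by omega) (by rw [hx, hA])
      have hx2 : sv σ (j0 + 1) = a - 2 * j - 2 := by omega
      rw [show j0 + 1 = p - (j - 1) by omega, hA'] at hx2
      push_cast [hj1] at hx2
      omega
    · have he : j0 + 1 = p - j := sv_inj σ (by omega) (by omega) (by rw [hx, hA])
      have hpj : j + 1 ≤ p := by omega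
      have hnew : sv σ (p - (j + 1)) = a - 2 * (j + 1) := by
        rw [show p - (j + 1) = j0 by omega]
        push_cast; omega
      refine ⟨hpj, hjn, h0, h1, fun t ht1 ht2 => ?_, hR⟩
      rcases Nat.lt_or_ge t (j + 1) with h | h
      · exact hL t ht1 (by omega)
      · obtain rfl : t = j + 1 := by omega
        exact hnew

lemma Lfalse (σ : Equiv.Perm (Fin n)) (hsep : ∀ b : Fin n, IsVSepVal σ b ∨ IsHSepVal σ b) (p : ℕ) (a : ℤ)
    (h : D σ p a 1 0) : False := by
  have H : ∀ m : ℕ, D σ p a (m + 1) m := by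
    intro m
    induction m with
    | zero => exact h
    | succ m ih =>
      exact Lstep2 σ hsep p a (by omega) (Lstep1 σ hsep p a ih)
  have h1 := (H n).1
  have h2 := (H n).2.1
  omega


lemma isV_iff (σ : Equiv.Perm (Fin n)) (b : Fin n) : IsVSepVal σ b ↔
    ∃ j : ℕ, j + 2 < n ∧ ((σ⁻¹ b : Fin n) : ℕ) = j + 1 ∧
      (sv σ j - sv σ (j + 2)).natAbs = 1 := by
  constructor
  · rintro ⟨j, hj2, hk, habs⟩
    exact ⟨j, hj2, hk, by rw [sv_eq σ (by omega : j < n), sv_eq σ hj2]; exact habs⟩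
  · rintro ⟨j, hj2, hk, habs⟩
    rw [sv_eq σ (by omega : j < n), sv_eq σ hj2] at habs
    exact ⟨j, hj2, hk, habs⟩

lemma isH_iff (σ : Equiv.Perm (Fin n)) (b : Fin n) : IsHSepVal σ b ↔
    ∃ j : ℕ, j + 1 < n ∧ (sv σ j - sv σ (j + 1)).natAbs = 2 ∧
      sv σ j + sv σ (j + 1) = 2 * (b : ℤ) := by
  constructor
  · rintro ⟨j, hj1, habs, hsum⟩
    rw [← sv_eq σ (by omega : j < n), ← sv_eq σ hj1] at habs hsum
    exact ⟨j, hj1, habs, hsum⟩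
  · rintro ⟨j, hj1, habs, hsum⟩
    rw [sv_eq σ (by omega : j < n), sv_eq σ hj1] at habs hsum
    exact ⟨j, hj1, habs, hsum⟩

lemma revPerm_inv : (Fin.revPerm : Equiv.Perm (Fin n))⁻¹ = Fin.revPerm := by
  rw [show (Fin.revPerm : Equiv.Perm (Fin n))⁻¹ = Fin.revPerm.symm from rfl,
    Fin.revPerm_symm]

lemma sv_mul_rev (σ : Equiv.Perm (Fin n)) {q : ℕ} (hq : q < n) :
    sv (σ * Fin.revPerm) q = sv σ (n - 1 - q) := by
  have hrev : (Fin.revPerm (⟨q, hq⟩ : Fin n)) = ⟨n - 1 - q, by omega⟩ := by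
    apply Fin.ext
    simp only [Fin.revPerm_apply, Fin.val_rev, Fin.val_mk]
    omega
  rw [sv_eq _ hq, sv_eq σ (by omega : n - 1 - q < n), Equiv.Perm.mul_apply, hrev]

lemma sv_rev_mul (σ : Equiv.Perm (Fin n)) {q : ℕ} (hq : q < n) :
    sv (Fin.revPerm * σ) q = (n : ℤ) - 1 - sv σ q := by
  rw [sv_eq _ hq, sv_eq σ hq, Equiv.Perm.mul_apply, Fin.revPerm_apply, Fin.val_rev]
  have := (σ ⟨q, hq⟩).isLt
  push_cast
  omega

lemma hsep_mul_rev (σ : Equiv.Perm (Fin n))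
    (hsep : ∀ b : Fin n, IsVSepVal σ b ∨ IsHSepVal σ b) :
    ∀ b : Fin n, IsVSepVal (σ * Fin.revPerm) b ∨ IsHSepVal (σ * Fin.revPerm) b := by
  intro b
  rcases hsep b with h | h
  · left
    rw [isV_iff] at h ⊢
    obtain ⟨j, hj2, hk, habs⟩ := h
    refine ⟨n - 3 - j, by omega, ?_, ?_⟩
    · have hinv : ((((σ * Fin.revPerm)⁻¹ : Equiv.Perm (Fin n)) b : Fin n) : ℕ) = n - 1 - ((σ⁻¹ b : Fin n) : ℕ) := by
        rw [mul_inv_rev, Equiv.Perm.mul_apply, revPerm_inv, Fin.revPerm_apply,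
          Fin.val_rev]
        omega
      omega
    · rw [sv_mul_rev σ (by omega), sv_mul_rev σ (by omega),
        show n - 1 - (n - 3 - j) = j + 2 by omega,
        show n - 1 - (n - 3 - j + 2) = j by omega]
      omega
  · right
    rw [isH_iff] at h ⊢
    obtain ⟨j, hj1, habs, hsum⟩ := h
    refine ⟨n - 2 - j, by omega, ?_, ?_⟩ <;>
      rw [sv_mul_rev σ (by omega), sv_mul_rev σ (by omega),
        show n - 1 - (n - 2 - j) = j + 1 by omega,
        show n - 1 - (n - 2 - j + 1) = j by omega] <;>
      omega

lemma hsep_rev_mul (σ : Equiv.Perm (Fin n))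
    (hsep : ∀ b : Fin n, IsVSepVal σ b ∨ IsHSepVal σ b) :
    ∀ b : Fin n, IsVSepVal (Fin.revPerm * σ) b ∨ IsHSepVal (Fin.revPerm * σ) b := by
  intro b
  have hinv : (((Fin.revPerm * σ : Equiv.Perm (Fin n))⁻¹ : Equiv.Perm (Fin n)) b : Fin n) = σ⁻¹ (Fin.revPerm b) := by
    rw [mul_inv_rev, Equiv.Perm.mul_apply, revPerm_inv]
  have hbv : ((Fin.revPerm b : Fin n) : ℕ) = n - 1 - (b : ℕ) := by
    rw [Fin.revPerm_apply, Fin.val_rev]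
    omega
  rcases hsep (Fin.revPerm b) with h | h
  · left
    rw [isV_iff] at h ⊢
    obtain ⟨j, hj2, hk, habs⟩ := h
    refine ⟨j, hj2, by rw [hinv]; exact hk, ?_⟩
    rw [sv_rev_mul σ (by omega), sv_rev_mul σ (by omega)]
    omega
  · right
    rw [isH_iff] at h ⊢
    obtain ⟨j, hj1, habs, hsum⟩ := h
    have hb := b.isLt
    refine ⟨j, hj1, ?_, ?_⟩ <;>
      rw [sv_rev_mul σ (by omega), sv_rev_mul σ (by omega)] <;>
      omega

lemma key2 (σ : Equiv.Perm (Fin n))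
    (hsep : ∀ b : Fin n, IsVSepVal σ b ∨ IsHSepVal σ b) (p : ℕ) (a : ℤ)
    (h2 : p + 2 < n) (h0 : sv σ p = a) (h1 : sv σ (p + 1) = a + 1)
    (hm : sv σ (p + 2) = a - 1) : False := by
  rcases query σ hsep (show p + 2 < n from h2) with
    ⟨j0, hj02, heq, habs⟩ | ⟨j0, hj01, habs, hsum⟩
  · obtain rfl : j0 = p + 1 := by omega
    rw [h1] at habs
    have hopts : sv σ (p + 1 + 2) = a ∨ sv σ (p + 1 + 2) = a + 2 := by omega
    rcases hopts with hx | hx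
    · have := sv_inj σ (by omega : p + 1 + 2 < n) (by omega : p < n) (by rw [hx, h0])
      omega
    · refine Rfalse σ hsep p a ⟨by omega, fun i hi => ?_, fun i hi => ?_⟩
      · have hi1 : i ≤ 1 := by omega
        interval_cases i
        · simpa using h0
        · rw [show p + 2 * 1 = p + 2 by ring, hm]
          push_cast; ring
      · have hi1 : i ≤ 1 := by omega
        interval_cases i
        · rw [show p + (2 * 0 + 1) = p + 1 by ring, h1]
          push_cast; ring
        · rw [show p + (2 * 1 + 1) = p + 1 + 2 by ring, hx]
          push_cast; ring
  · rw [hm] at hsum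
    have hc : sv σ j0 = a ∨ sv σ (j0 + 1) = a := by omega
    rcases hc with hx | hx
    · have he : j0 = p := sv_inj σ (by omega) (by omega) (by rw [hx, h0])
      subst he
      rw [h1] at hsum
      omega
    · have he : j0 + 1 = p := sv_inj σ (by omega) (by omega) (by rw [hx, h0])
      have hx2 : sv σ (p - 1) = a - 2 := by
        rw [show p - 1 = j0 by omega]
        omega
      refine Lfalse σ hsep p a ⟨by omega, by omega, h0, h1, fun t ht1 ht2 => ?_,
        fun s hs => ?_⟩
      · obtain rfl : t = 1 := by omega
        rw [hx2]; push_cast; ring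
      · obtain rfl : s = 0 := by omega
        rw [show p + 2 + 0 = p + 2 by ring, hm]
        push_cast; ring

lemma key (σ : Equiv.Perm (Fin n))
    (hsep : ∀ b : Fin n, IsVSepVal σ b ∨ IsHSepVal σ b) (p : ℕ) (a : ℤ)
    (h1p : p + 1 < n) (h0 : sv σ p = a) (h1 : sv σ (p + 1) = a + 1) : False := by
  rcases query σ hsep (show p + 1 < n from h1p) with
    ⟨j0, hj02, heq, habs⟩ | ⟨j0, hj01, habs, hsum⟩
  · rw [show j0 = p from by omega] at habs hj02
    rw [h0] at habs
    have hopts : sv σ (p + 2) = a + 1 ∨ sv σ (p + 2) = a - 1 := by omega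
    rcases hopts with hx | hx
    · have := sv_inj σ (by omega : p + 2 < n) (by omega : p + 1 < n) (by rw [hx, h1])
      omega
    · exact key2 σ hsep p a (by omega) h0 h1 hx
  · rw [h1] at hsum
    have hc : sv σ j0 = a ∨ sv σ (j0 + 1) = a := by omega
    rcases hc with hx | hx
    · have he : j0 = p := sv_inj σ (by omega) (by omega) (by rw [hx, h0])
      subst he
      rw [h1] at hsum
      omega
    · have he : j0 + 1 = p := sv_inj σ (by omega) (by omega) (by rw [hx, h0])
      have hp1 : 1 ≤ p := by omega
      have hx2 : sv σ (p - 1) = a + 2 := by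
        rw [show p - 1 = j0 by omega]
        omega
      -- pattern (a+2, a, a+1) at p-1, p, p+1 : transform by reversal + complement
      set τ : Equiv.Perm (Fin n) := Fin.revPerm * (σ * Fin.revPerm) with hτ
      have hsepτ := hsep_rev_mul _ (hsep_mul_rev σ hsep)
      have hsv : ∀ q : ℕ, q < n → sv τ q = (n : ℤ) - 1 - sv σ (n - 1 - q) := by
        intro q hq
        rw [hτ, sv_rev_mul _ hq, sv_mul_rev σ hq]
      have hq0 : sv τ (n - p - 2) = (n : ℤ) - 2 - a := by
        rw [hsv _ (by omega), show n - 1 - (n - p - 2) = p + 1 by omega, h1]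
        ring
      have hq1 : sv τ (n - p - 2 + 1) = (n : ℤ) - 2 - a + 1 := by
        rw [hsv _ (by omega), show n - 1 - (n - p - 2 + 1) = p by omega, h0]
        ring
      have hq2 : sv τ (n - p - 2 + 2) = (n : ℤ) - 2 - a - 1 := by
        rw [hsv _ (by omega), show n - 1 - (n - p - 2 + 2) = p - 1 by omega, hx2]
        ring
      exact key2 τ hsepτ (n - p - 2) ((n : ℤ) - 2 - a) (by omega) hq0 hq1 hq2

end Stmt6Aux

open Stmt6Aux

/-- if every digit of `σ` is a separator then `σ` has no bonds,
i.e. `σ` is a king permutation. -/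
theorem stmt6 {n : ℕ} (σ : Equiv.Perm (Fin n))
    (hsep : ∀ b : Fin n, IsVSepVal σ b ∨ IsHSepVal σ b) :
    ∀ (j : ℕ) (h : j + 1 < n), ¬ PermBondAt σ j h := by
  intro j h hbond
  have hb : (sv σ j - sv σ (j + 1)).natAbs = 1 := by
    rw [sv_eq σ (show j < n by omega), sv_eq σ h]
    exact hbond
  have hc : sv σ (j + 1) = sv σ j + 1 ∨ sv σ j = sv σ (j + 1) + 1 := by omega
  rcases hc with hc | hc
  · exact key σ hsep j (sv σ j) h rfl hc
  · have hsepτ := hsep_mul_rev σ hsep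
    have e0 : sv (σ * Fin.revPerm) (n - 2 - j) = sv σ (j + 1) := by
      rw [sv_mul_rev σ (by omega), show n - 1 - (n - 2 - j) = j + 1 by omega]
    have e1 : sv (σ * Fin.revPerm) (n - 2 - j + 1) = sv σ (j + 1) + 1 := by
      rw [sv_mul_rev σ (by omega), show n - 1 - (n - 2 - j + 1) = j by omega]
      omega
    exact key (σ * Fin.revPerm) hsepτ (n - 2 - j) (sv σ (j + 1)) (by omega) e0 e1
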